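/- Let M ≥ 1 be an integer, let T : ℝ^{2M} → ℝ^M be a continuous function, let K ⊆ ℝ^{2M} be a compact set, and let ε > 0. Then there exist a positive integer d̂, a matrix S ∈ ℝ^{M × d̂M} whose M rows are linearly independent (i.e., S has rank M, so that S admits a right inverse S⁺ with S·S⁺ = I_M), a matrix B ∈ ℝ^{d̂M × 2M}, and a vector A ∈ ℝ^{d̂M} such that for every X ∈ K one has ‖T(X) − S·ReLU(B·X + A)‖ ≤ ε, where ‖·‖ denotes the Euclidean norm on ℝ^M. -/

import Mathlib

/-- The Euclidean norm on `ℝ^M` (vectors indexed by `Fin M`). -/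
noncomputable def eNorm {M : ℕ} (v : Fin M → ℝ) : ℝ :=
  ‖(WithLp.equiv 2 (Fin M → ℝ)).symm v‖

/-- The rectified linear unit applied componentwise. -/
def relu {n : Type*} (z : n → ℝ) : n → ℝ := fun i => max (z i) 0


/-- `ReluRep f` : `f` is exactly a 1D shallow ReLU net. -/
def ReluRep (f : ℝ → ℝ) : Prop :=
  ∃ (n : ℕ) (c w b : Fin n → ℝ), ∀ t, f t = ∑ i, c i * max (w i * t + b i) 0

lemma reluRep_const (α : ℝ) : ReluRep (fun _ => α) := by
  refine ⟨1, fun _ => α, fun _ => 0, fun _ => 1, fun t => ?_⟩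
  simp

lemma reluRep_unit (α w b : ℝ) : ReluRep (fun t => α * max (w * t + b) 0) := by
  exact ⟨1, fun _ => α, fun _ => w, fun _ => b, fun t => by simp⟩

lemma reluRep_add {f g : ℝ → ℝ} (hf : ReluRep f) (hg : ReluRep g) :
    ReluRep (fun t => f t + g t) := by
  obtain ⟨n₁, c₁, w₁, b₁, h₁⟩ := hf
  obtain ⟨n₂, c₂, w₂, b₂, h₂⟩ := hg
  refine ⟨n₁ + n₂, Fin.append c₁ c₂, Fin.append w₁ w₂, Fin.append b₁ b₂, fun t => ?_⟩
  show f t + g t = _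
  rw [h₁ t, h₂ t, Fin.sum_univ_add]
  simp [Fin.append_left, Fin.append_right]

lemma reluRep_sum {ι : Type*} (s : Finset ι) (F : ι → ℝ → ℝ)
    (h : ∀ i ∈ s, ReluRep (F i)) : ReluRep (fun t => ∑ i ∈ s, F i t) := by
  classical
  induction s using Finset.cons_induction with
  | empty => simpa using reluRep_const 0
  | cons a s ha ih =>
      have h2 := reluRep_add (h a (Finset.mem_cons_self a s))
        (ih (fun i hi => h i (Finset.mem_cons_of_mem hi)))
      have he : (fun t => ∑ i ∈ Finset.cons a s ha, F i t)
          = fun t => F a t + ∑ i ∈ s, F i t := by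
        funext t; rw [Finset.sum_cons]
      rw [he]
      exact h2

lemma reluRep_min (α c : ℝ) : ReluRep (fun t => α * min t c) := by
  have h : ∀ t : ℝ, α * min t c = α * c + (-α) * max ((-1) * t + c) 0 := by
    intro t
    rcases le_total t c with h | h
    · rw [min_eq_left h, max_eq_left (by linarith)]; ring
    · rw [min_eq_right h, max_eq_right (by linarith)]; ring
  have := reluRep_add (reluRep_const (α * c)) (reluRep_unit (-α) (-1) c)
  convert this using 1
  funext t; rw [h t]

/-- coverage: a point in `[grid 0, grid N]` is in some cell. -/
lemma exists_cell (grid : ℕ → ℝ) : ∀ (N : ℕ), 0 < N → ∀ t : ℝ, grid 0 ≤ t → t ≤ grid N →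
    ∃ k < N, grid k ≤ t ∧ t ≤ grid (k + 1) := by
  intro N
  induction N with
  | zero => omega
  | succ N ih =>
      intro _ t h0 hN
      rcases Nat.eq_zero_or_pos N with hN0 | hNpos
      · exact ⟨0, by omega, by simpa [hN0] using And.intro h0 hN⟩
      rcases le_total t (grid N) with h | h
      · obtain ⟨k, hk, hk1, hk2⟩ := ih hNpos t h0 h
        exact ⟨k, by omega, hk1, hk2⟩
      · exact ⟨N, by omega, h, hN⟩

/-- 1D approximation of a continuous function by a ReLU net on `[-R, R]`. -/
lemma oneD_approx (g : ℝ → ℝ) (hg : Continuous g) (R : ℝ) (hR : 0 < R)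
    (ε : ℝ) (hε : 0 < ε) :
    ∃ p : ℝ → ℝ, ReluRep p ∧ ∀ t ∈ Set.Icc (-R) R, |g t - p t| ≤ ε := by
  -- uniform continuity on the compact interval
  have hK : IsCompact (Set.Icc (-R) R) := isCompact_Icc
  have hUC : UniformContinuousOn g (Set.Icc (-R) R) :=
    hK.uniformContinuousOn_of_continuous hg.continuousOn
  rw [Metric.uniformContinuousOn_iff] at hUC
  obtain ⟨δ, hδ, hδ'⟩ := hUC (ε / 2) (by linarith)
  -- grid
  set N : ℕ := max 1 ⌈2 * R / (δ / 2)⌉₊ with hNdef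
  have hN1 : 1 ≤ N := le_max_left _ _
  have hNpos : (0 : ℝ) < N := by exact_mod_cast Nat.lt_of_lt_of_le Nat.zero_lt_one hN1
  set h : ℝ := 2 * R / N with hhdef
  have hhpos : 0 < h := by positivity
  have hhδ : h < δ := by
    have h1 : 2 * R / (δ / 2) ≤ N := by
      exact_mod_cast (Nat.le_ceil _).trans (by exact_mod_cast le_max_right 1 _)
    have : 2 * R ≤ N * (δ / 2) := by
      rw [div_le_iff₀ (by positivity)] at h1; linarith
    have : h ≤ δ / 2 := by
      rw [hhdef, div_le_iff₀ hNpos]; linarith [this]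
    linarith
  set grid : ℕ → ℝ := fun j => -R + j * h with hgrid
  have hgrid0 : grid 0 = -R := by simp [hgrid]
  have hgridN : grid N = R := by
    simp only [hgrid, hhdef]
    field_simp
    ring
  have hgrid_succ : ∀ j : ℕ, grid (j + 1) = grid j + h := by
    intro j; simp [hgrid]; push_cast; ring
  have hgrid_mem : ∀ j : ℕ, j ≤ N → grid j ∈ Set.Icc (-R) R := by
    intro j hj
    constructor
    · simp only [hgrid]; nlinarith [hhpos, (by exact_mod_cast Nat.cast_nonneg j : (0:ℝ) ≤ j)]
    · have : grid j ≤ grid N := by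
        simp only [hgrid]
        have : (j : ℝ) ≤ N := by exact_mod_cast hj
        nlinarith
      rwa [hgridN] at this
  set m : ℕ → ℝ := fun j => (g (grid (j + 1)) - g (grid j)) / h with hm
  set p : ℝ → ℝ := fun t => g (grid 0) +
      ∑ j ∈ Finset.range N, (m j * min t (grid (j + 1)) + (-(m j)) * min t (grid j)) with hp
  refine ⟨p, ?_, ?_⟩
  · apply reluRep_add (reluRep_const _)
    apply reluRep_sum
    intro j _
    exact reluRep_add (reluRep_min (m j) (grid (j+1))) (reluRep_min (-(m j)) (grid j))
  · intro t ht
    obtain ⟨k, hkN, hk1, hk2⟩ := exists_cell grid N (by omega) t (by rw [hgrid0]; exact ht.1)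
      (by rw [hgridN]; exact ht.2)
    clear_value p m grid h N
    -- value of p on cell k
    have hmono : ∀ i j : ℕ, i ≤ j → grid i ≤ grid j := by
      intro i j hij
      simp only [hgrid]
      have : (i : ℝ) ≤ j := by exact_mod_cast hij
      nlinarith
    have hpval : p t = g (grid k) + m k * (t - grid k) := by
      have hsplit : Finset.range N = Finset.range (k+1) ∪ Finset.Ico (k+1) N := by
        rw [Finset.range_eq_Ico, Finset.range_eq_Ico]
        exact (Finset.Ico_union_Ico_eq_Ico (by omega) (by omega)).symm
      have hdisj : Disjoint (Finset.range (k+1)) (Finset.Ico (k+1) N) := by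
        simp [Finset.disjoint_left]; omega
      rw [hp]
      simp only
      rw [hsplit, Finset.sum_union hdisj, Finset.sum_range_succ]
      have hlow : ∀ j ∈ Finset.range k,
          m j * min t (grid (j + 1)) + (-(m j)) * min t (grid j) = m j * h := by
        intro j hj
        rw [Finset.mem_range] at hj
        have h1 : grid (j+1) ≤ t := le_trans (hmono _ _ (by omega)) hk1
        have h2 : grid j ≤ t := le_trans (hmono _ _ (by omega)) hk1
        rw [min_eq_right h1, min_eq_right h2, hgrid_succ]; ring
      have hhigh : ∀ j ∈ Finset.Ico (k+1) N,
          m j * min t (grid (j + 1)) + (-(m j)) * min t (grid j) = 0 := by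
        intro j hj
        rw [Finset.mem_Ico] at hj
        have h1 : t ≤ grid j := le_trans hk2 (hmono _ _ (by omega))
        have h2 : t ≤ grid (j+1) := le_trans h1 (hmono _ _ (by omega))
        rw [min_eq_left h1, min_eq_left h2]; ring
      rw [Finset.sum_congr rfl hlow, Finset.sum_congr rfl hhigh]
      rw [min_eq_left hk2, min_eq_right hk1]
      have htel : ∑ j ∈ Finset.range k, m j * h = g (grid k) - g (grid 0) := by
        have : ∀ j, m j * h = g (grid (j+1)) - g (grid j) := by
          intro j; rw [hm]; field_simp
        rw [Finset.sum_congr rfl (fun j _ => this j)]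
        exact Finset.sum_range_sub (fun j => g (grid j)) k
      rw [htel, Finset.sum_const_zero]
      clear hp hm
      ring
    -- estimate
    have hkmem : grid k ∈ Set.Icc (-R) R := hgrid_mem k (by omega)
    have hk1mem : grid (k+1) ∈ Set.Icc (-R) R := hgrid_mem (k+1) (by omega)
    have htk : |t - grid k| < δ := by
      rw [abs_lt]
      have := hgrid_succ k
      constructor <;> nlinarith
    have e1 : |g t - g (grid k)| ≤ ε / 2 := by
      have := hδ' t ht (grid k) hkmem (by rwa [Real.dist_eq])
      rw [Real.dist_eq] at this; linarith [this]
    have e2 : |m k * (t - grid k)| ≤ ε / 2 := by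
      have hg2 : |g (grid (k+1)) - g (grid k)| ≤ ε / 2 := by
        have hd : dist (grid (k+1)) (grid k) < δ := by
          rw [Real.dist_eq, hgrid_succ]
          rw [abs_of_nonneg (by linarith)]; linarith
        have := hδ' (grid (k+1)) hk1mem (grid k) hkmem hd
        rw [Real.dist_eq] at this; linarith
      have htk' : |t - grid k| ≤ h := by
        rw [abs_of_nonneg (by linarith)]
        have := hgrid_succ k; linarith
      rw [abs_mul, hm]
      simp only [abs_div]
      rw [abs_of_pos hhpos, div_mul_eq_mul_div, div_le_iff₀ hhpos]
      calc |g (grid (k+1)) - g (grid k)| * |t - grid k|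
          ≤ (ε/2) * h := by
            apply mul_le_mul hg2 htk' (abs_nonneg _) (by linarith)
        _ = ε / 2 * h := rfl
    calc |g t - p t| = |(g t - g (grid k)) + (-(m k * (t - grid k)))| := by
          rw [hpval]; ring_nf
      _ ≤ |g t - g (grid k)| + |-(m k * (t - grid k))| := abs_add_le _ _
      _ ≤ ε / 2 + ε / 2 := by rw [abs_neg]; exact add_le_add e1 e2
      _ = ε := by ring

/-- `f` can be approximated on `K` to arbitrary accuracy by shallow ReLU nets. -/
def NetApprox {D : ℕ} (K : Set (Fin D → ℝ)) (f : (Fin D → ℝ) → ℝ) : Prop :=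
  ∀ ε : ℝ, 0 < ε → ∃ (n : ℕ) (c : Fin n → ℝ) (w : Fin n → Fin D → ℝ) (b : Fin n → ℝ),
    ∀ x ∈ K, |f x - ∑ i, c i * max ((∑ j, w i j * x j) + b i) 0| ≤ ε

lemma netApprox_add {D : ℕ} {K : Set (Fin D → ℝ)} {f g : (Fin D → ℝ) → ℝ}
    (hf : NetApprox K f) (hg : NetApprox K g) : NetApprox K (fun x => f x + g x) := by
  intro ε hε
  obtain ⟨n₁, c₁, w₁, b₁, h₁⟩ := hf (ε/2) (by linarith)
  obtain ⟨n₂, c₂, w₂, b₂, h₂⟩ := hg (ε/2) (by linarith)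
  refine ⟨n₁ + n₂, Fin.append c₁ c₂, Fin.append w₁ w₂, Fin.append b₁ b₂, fun x hx => ?_⟩
  rw [Fin.sum_univ_add]
  simp only [Fin.append_left, Fin.append_right]
  have := abs_add_le (f x - ∑ i, c₁ i * max ((∑ j, w₁ i j * x j) + b₁ i) 0)
    (g x - ∑ i, c₂ i * max ((∑ j, w₂ i j * x j) + b₂ i) 0)
  have h1 := h₁ x hx
  have h2 := h₂ x hx
  have heq : f x + g x - (∑ i, c₁ i * max ((∑ j, w₁ i j * x j) + b₁ i) 0
      + ∑ i, c₂ i * max ((∑ j, w₂ i j * x j) + b₂ i) 0)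
      = (f x - ∑ i, c₁ i * max ((∑ j, w₁ i j * x j) + b₁ i) 0)
      + (g x - ∑ i, c₂ i * max ((∑ j, w₂ i j * x j) + b₂ i) 0) := by ring
  rw [heq]
  linarith

lemma netApprox_smul {D : ℕ} {K : Set (Fin D → ℝ)} {f : (Fin D → ℝ) → ℝ} (α : ℝ)
    (hf : NetApprox K f) : NetApprox K (fun x => α * f x) := by
  intro ε hε
  obtain ⟨n, c, w, b, h⟩ := hf (ε / (|α| + 1)) (by positivity)
  refine ⟨n, fun i => α * c i, w, b, fun x hx => ?_⟩
  have h1 := h x hx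
  have heq : α * f x - ∑ i, α * c i * max ((∑ j, w i j * x j) + b i) 0
      = α * (f x - ∑ i, c i * max ((∑ j, w i j * x j) + b i) 0) := by
    rw [mul_sub, Finset.mul_sum]
    congr 1
    exact Finset.sum_congr rfl (fun i _ => by ring)
  rw [heq, abs_mul]
  have hα : |α| + 1 > 0 := by positivity
  calc |α| * |f x - ∑ i, c i * max ((∑ j, w i j * x j) + b i) 0|
      ≤ (|α| + 1) * (ε / (|α| + 1)) := by
        apply mul_le_mul (by linarith) h1 (abs_nonneg _) (by positivity)
    _ = ε := by field_simp
  
lemma netApprox_zero {D : ℕ} {K : Set (Fin D → ℝ)} : NetApprox K (fun _ => (0:ℝ)) := by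
  intro ε hε
  exact ⟨0, Fin.elim0, Fin.elim0, Fin.elim0, fun x hx => by simp; linarith⟩

lemma netApprox_sum {D : ℕ} {K : Set (Fin D → ℝ)} {ι : Type*} (s : Finset ι)
    (F : ι → (Fin D → ℝ) → ℝ) (h : ∀ i ∈ s, NetApprox K (F i)) :
    NetApprox K (fun x => ∑ i ∈ s, F i x) := by
  classical
  induction s using Finset.cons_induction with
  | empty => simpa using netApprox_zero
  | cons a s ha ih =>
      have h2 := netApprox_add (h a (Finset.mem_cons_self a s))
        (ih (fun i hi => h i (Finset.mem_cons_of_mem hi)))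
      have he : (fun x => ∑ i ∈ Finset.cons a s ha, F i x)
          = fun x => F a x + ∑ i ∈ s, F i x := by
        funext x; rw [Finset.sum_cons]
      rw [he]
      exact h2

lemma netApprox_expRidge {D : ℕ} {K : Set (Fin D → ℝ)} (hK : IsCompact K)
    (a : Fin D → ℝ) : NetApprox K (fun x => Real.exp (∑ j, a j * x j)) := by
  intro ε hε
  -- bound the linear form on K
  obtain ⟨C, hC⟩ := hK.exists_bound_of_continuousOn (f := fun x => ∑ j, a j * x j)
    (by fun_prop)
  set R : ℝ := max C 0 + 1 with hR
  have hRpos : 0 < R := by positivity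
  obtain ⟨p, hp, hperr⟩ := oneD_approx Real.exp Real.continuous_exp R hRpos ε hε
  obtain ⟨n, c, w, b, hrep⟩ := hp
  refine ⟨n, c, fun i j => w i * a j, b, fun x hx => ?_⟩
  have hmem : (∑ j, a j * x j) ∈ Set.Icc (-R) R := by
    have := hC x hx
    rw [Real.norm_eq_abs, abs_le] at this
    constructor
    · have : -(max C 0) ≤ ∑ j, a j * x j := by
        have := this.1
        have h2 : C ≤ max C 0 := le_max_left _ _
        linarith
      rw [hR]; linarith
    · have h2 : C ≤ max C 0 := le_max_left _ _
      rw [hR]; linarith [this.2]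
  have hval : ∀ i : Fin n, (∑ j, (w i * a j) * x j) + b i = w i * (∑ j, a j * x j) + b i := by
    intro i
    rw [Finset.mul_sum]
    congr 1
    exact Finset.sum_congr rfl (fun j _ => by ring)
  have : (∑ i, c i * max ((∑ j, (w i * a j) * x j) + b i) 0) = p (∑ j, a j * x j) := by
    rw [hrep]
    exact Finset.sum_congr rfl (fun i _ => by rw [hval i])
  rw [this]
  exact hperr _ hmem

/-- The main scalar approximation lemma. -/
lemma scalar_approx {D : ℕ} (K : Set (Fin D → ℝ)) (hK : IsCompact K)
    (f : (Fin D → ℝ) → ℝ) (hf : Continuous f) : NetApprox K f := by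
  intro ε hε
  haveI : CompactSpace ↥K := isCompact_iff_compactSpace.mp hK
  -- exponential ridge functions as a submonoid of C(K, ℝ)
  let er : (Fin D → ℝ) → C(↥K, ℝ) := fun a =>
    ⟨fun x => Real.exp (∑ j, a j * (x : Fin D → ℝ) j),
      Real.continuous_exp.comp (continuous_finset_sum _ (fun j _ =>
        continuous_const.mul ((continuous_apply j).comp continuous_subtype_val)))⟩
  let E : Submonoid C(↥K, ℝ) :=
    { carrier := Set.range er
      mul_mem' := by
        rintro _ _ ⟨a, rfl⟩ ⟨b, rfl⟩
        refine ⟨a + b, ?_⟩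
        ext x
        simp only [er, ContinuousMap.mul_apply, ContinuousMap.coe_mk, Pi.add_apply]
        rw [← Real.exp_add]
        congr 1
        rw [← Finset.sum_add_distrib]
        exact Finset.sum_congr rfl (fun j _ => by ring)
      one_mem' := by
        refine ⟨0, ?_⟩
        ext x
        simp [er] }
  let A : Subalgebra ℝ C(↥K, ℝ) := Algebra.adjoin ℝ (Set.range er)
  have hsep : A.SeparatesPoints := by
    intro x y hxy
    have hxy' : (x : Fin D → ℝ) ≠ (y : Fin D → ℝ) := fun h => hxy (Subtype.ext h)
    obtain ⟨j, hj⟩ := Function.ne_iff.mp hxy'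
    refine ⟨⇑(er (Pi.single j 1)),
      ⟨er (Pi.single j 1), Algebra.subset_adjoin ⟨Pi.single j 1, rfl⟩, rfl⟩, ?_⟩
    simp only [er, ContinuousMap.coe_mk]
    have hsum : ∀ z : ↥K, (∑ i, (Pi.single j 1 : Fin D → ℝ) i * (z : Fin D → ℝ) i)
        = (z : Fin D → ℝ) j := by
      intro z
      rw [Finset.sum_eq_single j]
      · simp
      · intro i _ hi; exact mul_eq_zero_of_left (Pi.single_eq_of_ne hi 1) _
      · simp
    rw [hsum, hsum]
    exact fun h => hj (Real.exp_injective h)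
  -- Stone-Weierstrass
  obtain ⟨g, hg⟩ := ContinuousMap.exists_mem_subalgebra_near_continuous_of_separatesPoints
    A hsep (fun x : ↥K => f x) (hf.comp continuous_subtype_val) (ε/2) (by linarith)
  -- g is a finite linear combination of exponential ridge functions
  have hgspan : (g : C(↥K, ℝ)) ∈ Submodule.span ℝ (Set.range er) := by
    have h1 := g.2
    have h2 : Subalgebra.toSubmodule (Algebra.adjoin ℝ (Set.range er))
        = Submodule.span ℝ (Submonoid.closure (Set.range er) : Set C(↥K, ℝ)) :=
      Algebra.adjoin_eq_span ℝ _
    have h3 : Submonoid.closure (Set.range er) = E := Submonoid.closure_eq E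
    rw [h3] at h2
    have : (g : C(↥K, ℝ)) ∈ Subalgebra.toSubmodule A := h1
    rw [h2] at this
    exact this
  rw [Submodule.mem_span_set'] at hgspan
  obtain ⟨n, α, v, hv⟩ := hgspan
  choose aa haa using fun i => (v i).2
  -- the combination as a function on ℝ^D
  set G : (Fin D → ℝ) → ℝ := fun x => ∑ i, α i * Real.exp (∑ j, aa i j * x j) with hG
  have hGval : ∀ x : ↥K, (g : C(↥K, ℝ)) x = G ((x : Fin D → ℝ)) := by
    intro x
    rw [← hv]
    rw [ContinuousMap.coe_sum]
    rw [Finset.sum_apply]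
    refine Finset.sum_congr rfl (fun i _ => ?_)
    rw [ContinuousMap.coe_smul, Pi.smul_apply, smul_eq_mul]
    congr 1
    rw [← haa i]
    rfl
  have hGapp : NetApprox K G := by
    rw [hG]
    exact netApprox_sum _ _ (fun i _ =>
      netApprox_smul (α i) (netApprox_expRidge hK (aa i)))
  obtain ⟨m, c, w, b, hnet⟩ := hGapp (ε/2) (by linarith)
  refine ⟨m, c, w, b, fun x hx => ?_⟩
  have h1 : |f x - G x| ≤ ε/2 := by
    have h0 := hg ⟨x, hx⟩
    rw [Real.norm_eq_abs, hGval ⟨x, hx⟩] at h0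
    rw [abs_sub_comm]
    exact le_of_lt h0
  have h2 := hnet x hx
  calc |f x - ∑ i, c i * max ((∑ j, w i j * x j) + b i) 0|
      = |(f x - G x) + (G x - ∑ i, c i * max ((∑ j, w i j * x j) + b i) 0)| := by ring_nf
    _ ≤ |f x - G x| + |G x - ∑ i, c i * max ((∑ j, w i j * x j) + b i) 0| := abs_add_le _ _
    _ ≤ ε/2 + ε/2 := add_le_add h1 h2
    _ = ε := by ring

lemma sum_pad {n q : ℕ} (hnq : n ≤ q) (F : Fin n → ℝ) :
    ∑ j : Fin q, (if hj : (j : ℕ) < n then F ⟨j, hj⟩ else 0) = ∑ i, F i := by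
  set G : ℕ → ℝ := fun j => if hj : j < n then F ⟨j, hj⟩ else 0 with hG
  have h1 : ∑ j : Fin q, (if hj : (j : ℕ) < n then F ⟨j, hj⟩ else 0)
      = ∑ j ∈ Finset.range q, G j := by
    rw [Finset.sum_range]
  have h2 : ∑ i, F i = ∑ j ∈ Finset.range n, G j := by
    rw [Finset.sum_range]
    refine Finset.sum_congr rfl (fun i _ => ?_)
    rw [hG]
    simp [i.isLt]
  rw [h1, h2]
  rw [Finset.range_eq_Ico,
    ← Finset.sum_Ico_consecutive G (Nat.zero_le n) hnq]
  have : ∑ j ∈ Finset.Ico n q, G j = 0 := by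
    apply Finset.sum_eq_zero
    intro j hj
    rw [Finset.mem_Ico] at hj
    rw [hG]
    simp [Nat.not_lt.mpr hj.1]
  rw [this, add_zero, Finset.range_eq_Ico]


/-- Strengthened form of the paper's Lemma 1: universal approximation of a continuous
vector-valued function on a compact set by a one-hidden-layer ReLU network whose outer
weight matrix `S` has linearly independent rows (full row rank), hence admits a right
inverse `S⁺` with `S * S⁺ = 1`. -/
theorem shallow_relu_universal_approximation_full_rank
    (M : ℕ) (hM : 1 ≤ M)
    (T : (Fin (2 * M) → ℝ) → (Fin M → ℝ)) (hT : Continuous T)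
    (K : Set (Fin (2 * M) → ℝ)) (hK : IsCompact K)
    (ε : ℝ) (hε : 0 < ε) :
    ∃ (d : ℕ), 0 < d ∧
      ∃ (S : Matrix (Fin M) (Fin (d * M)) ℝ)
        (B : Matrix (Fin (d * M)) (Fin (2 * M)) ℝ)
        (A : Fin (d * M) → ℝ),
        LinearIndependent ℝ (fun i => S i) ∧
        (∃ Sp : Matrix (Fin (d * M)) (Fin M) ℝ, S * Sp = 1) ∧
        ∀ X ∈ K, eNorm (T X - S.mulVec (relu (B.mulVec X + A))) ≤ ε := by
    classical
  have hMR : (1 : ℝ) ≤ (M : ℝ) := by exact_mod_cast hM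
  have hεM : 0 < ε / M := by positivity
  -- per-row nets
  have H : ∀ r : Fin M, ∃ (n : ℕ) (c : Fin n → ℝ) (w : Fin n → Fin (2*M) → ℝ)
      (b : Fin n → ℝ), ∀ X ∈ K,
      |T X r - ∑ i, c i * max ((∑ j, w i j * X j) + b i) 0| ≤ ε / M := by
    intro r
    exact scalar_approx K hK (fun X => T X r) ((continuous_apply r).comp hT) (ε/M) hεM
  choose n c w b hnet using H
  set q : ℕ := Finset.univ.sup n with hq
  have hqle : ∀ r, n r ≤ q := fun r => Finset.le_sup (Finset.mem_univ r)
  refine ⟨q + 1, Nat.succ_pos q, ?_⟩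
  set e : Fin (q+1) × Fin M ≃ Fin ((q+1) * M) := finProdFinEquiv with he
  set S : Matrix (Fin M) (Fin ((q+1) * M)) ℝ := fun r' u =>
    if r' = (e.symm u).2 then
      (if h : ((e.symm u).1 : ℕ) < n (e.symm u).2 then c (e.symm u).2 ⟨(e.symm u).1, h⟩
       else if ((e.symm u).1 : ℕ) = q then 1 else 0)
    else 0 with hS
  set B : Matrix (Fin ((q+1) * M)) (Fin (2 * M)) ℝ := fun u col =>
    if h : ((e.symm u).1 : ℕ) < n (e.symm u).2 then w (e.symm u).2 ⟨(e.symm u).1, h⟩ col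
    else 0 with hB
  set A : Fin ((q+1) * M) → ℝ := fun u =>
    if h : ((e.symm u).1 : ℕ) < n (e.symm u).2 then b (e.symm u).2 ⟨(e.symm u).1, h⟩
    else -1 with hA
  have hSval : ∀ (jr : Fin (q+1) × Fin M) (r' : Fin M),
      S r' (e jr) = if r' = jr.2 then
        (if h : (jr.1 : ℕ) < n jr.2 then c jr.2 ⟨jr.1, h⟩
         else if (jr.1 : ℕ) = q then 1 else 0) else 0 := by
    intro jr r'
    have h2 : e.symm (e jr) = jr := e.symm_apply_apply jr
    simp only [hS]
    rw [h2]
  -- the key evaluation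
  have hkey : ∀ (X : Fin (2*M) → ℝ) (r' : Fin M),
      S.mulVec (relu (B.mulVec X + A)) r'
        = ∑ i, c r' i * max ((∑ j, w r' i j * X j) + b r' i) 0 := by
    intro X r'
    have hvval : ∀ (jr : Fin (q+1) × Fin M), relu (B.mulVec X + A) (e jr)
        = if h : (jr.1 : ℕ) < n jr.2
          then max ((∑ col, w jr.2 ⟨jr.1, h⟩ col * X col) + b jr.2 ⟨jr.1, h⟩) 0 else 0 := by
      intro jr
      have h2 : e.symm (e jr) = jr := e.symm_apply_apply jr
      have hBv : B (e jr) = fun col =>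
          if h : (jr.1 : ℕ) < n jr.2 then w jr.2 ⟨jr.1, h⟩ col else 0 := by
        simp only [hB]; rw [h2]
      have hAv : A (e jr) = if h : (jr.1 : ℕ) < n jr.2 then b jr.2 ⟨jr.1, h⟩ else -1 := by
        simp only [hA]; rw [h2]
      have hmv : B.mulVec X (e jr) = ∑ col, B (e jr) col * X col := rfl
      show max (B.mulVec X (e jr) + A (e jr)) 0 = _
      rw [hmv, hBv, hAv]
      by_cases h : (jr.1 : ℕ) < n jr.2
      · simp [h]
      · simp [h]
    rw [show S.mulVec (relu (B.mulVec X + A)) r'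
        = ∑ u, S r' u * relu (B.mulVec X + A) u from rfl]
    rw [← Equiv.sum_comp e (fun u => S r' u * relu (B.mulVec X + A) u)]
    rw [Fintype.sum_prod_type]
    have hstep : ∀ j : Fin (q+1),
        (∑ r : Fin M, S r' (e (j, r)) * relu (B.mulVec X + A) (e (j, r)))
        = if h : (j : ℕ) < n r'
          then c r' ⟨j, h⟩ * max ((∑ col, w r' ⟨j, h⟩ col * X col) + b r' ⟨j, h⟩) 0
          else 0 := by
      intro j
      rw [Finset.sum_eq_single r']
      · rw [hSval (j, r') r', if_pos rfl, hvval (j, r')]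
        by_cases h : (j : ℕ) < n r'
        · simp [h]
        · simp [h]
      · intro r _ hr
        rw [hSval (j, r) r', if_neg (fun hh => hr hh.symm), zero_mul]
      · intro habs
        exact absurd (Finset.mem_univ r') habs
    rw [Finset.sum_congr rfl (fun j _ => hstep j)]
    exact sum_pad (Nat.le_succ_of_le (hqle r'))
      (fun i => c r' i * max ((∑ col, w r' i col * X col) + b r' i) 0)
  -- the distinguished "identity" columns
  have hlastval : ∀ r r' : Fin M, S r' (e (Fin.last q, r)) = if r' = r then 1 else 0 := by
    intro r r'
    rw [hSval (Fin.last q, r) r']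
    have hnot : ¬ ((Fin.last q : ℕ) < n r) := by
      rw [Fin.val_last]
      exact Nat.not_lt.mpr (hqle r)
    by_cases hrr : r' = r
    · simp only [hrr, if_pos rfl]
      rw [dif_neg hnot]
      simp [Fin.val_last]
    · simp [hrr]
  refine ⟨S, B, A, ?_, ?_, ?_⟩
  · -- linear independence of the rows
    rw [Fintype.linearIndependent_iff]
    intro g hg r₀
    have h0 := congrFun hg (e (Fin.last q, r₀))
    rw [Finset.sum_apply] at h0
    simp only [Pi.smul_apply, smul_eq_mul] at h0
    rw [Finset.sum_congr rfl (fun r _ => by rw [hlastval r₀ r])] at h0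
    simpa using h0
  · -- right inverse
    refine ⟨fun u r' => if u = e (Fin.last q, r') then 1 else 0, ?_⟩
    ext r r'
    show ∑ u, S r u * (if u = e (Fin.last q, r') then 1 else 0) = (1 : Matrix (Fin M) (Fin M) ℝ) r r'
    simp only [mul_ite, mul_one, mul_zero]
    rw [Finset.sum_ite_eq' Finset.univ (e (Fin.last q, r')) (fun u => S r u)]
    rw [if_pos (Finset.mem_univ _), hlastval r' r, Matrix.one_apply]
  · -- the approximation bound
    intro X hX
    have hcomp : ∀ r : Fin M, |(T X - S.mulVec (relu (B.mulVec X + A))) r| ≤ ε / M := by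
      intro r
      rw [Pi.sub_apply, hkey X r]
      exact hnet r X hX
    have hnorm : eNorm (T X - S.mulVec (relu (B.mulVec X + A)))
        = Real.sqrt (∑ r, ‖(T X - S.mulVec (relu (B.mulVec X + A))) r‖ ^ 2) := by
      rw [eNorm, EuclideanSpace.norm_eq]
      congr 1
    rw [hnorm]
    have hsum : (∑ r, ‖(T X - S.mulVec (relu (B.mulVec X + A))) r‖ ^ 2) ≤ ε ^ 2 := by
      have h1 : ∀ r : Fin M, ‖(T X - S.mulVec (relu (B.mulVec X + A))) r‖ ^ 2 ≤ (ε/M)^2 := by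
        intro r
        rw [Real.norm_eq_abs]
        have := hcomp r
        have habs : (0:ℝ) ≤ |(T X - S.mulVec (relu (B.mulVec X + A))) r| := abs_nonneg _
        nlinarith
      calc (∑ r, ‖(T X - S.mulVec (relu (B.mulVec X + A))) r‖ ^ 2)
          ≤ ∑ _r : Fin M, (ε/M)^2 := Finset.sum_le_sum (fun r _ => h1 r)
        _ = M * (ε/M)^2 := by rw [Finset.sum_const]; simp [mul_comm]
        _ ≤ ε ^ 2 := by
            have hMpos : (0:ℝ) < (M:ℝ) := by linarith
            rw [div_pow]
            have he2 : (M:ℝ) * (ε^2 / (M:ℝ)^2) = ε^2 / M := by field_simp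
            rw [he2, div_le_iff₀ hMpos]
            nlinarith [sq_nonneg ε]
    calc Real.sqrt (∑ r, ‖(T X - S.mulVec (relu (B.mulVec X + A))) r‖ ^ 2)
        ≤ Real.sqrt (ε ^ 2) := Real.sqrt_le_sqrt hsum
      _ = ε := by rw [Real.sqrt_sq hε.le]
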